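/- Let $K$ be a number field and $v_0$ an odd non-archimedean place of $K$. Then there exists a nonzero $a \in \mathcal{O}_K$ such that: (i) $v_0(a)$ is odd; (ii) $a$ is positive at every real place of $K$; and (iii) $a$ is a square in $K_v$ for every place $v$ of $K$ dividing $2$. -/

import Mathlib

open scoped Multiplicative NumberField
open Filter Topology IsDedekindDomain HeightOneSpectrum

lemma zm_exists_pow_mul_lt (r c γ : (WithZero (Multiplicative ℤ))) (hr : r < 1) (hγ : γ ≠ 0) :
    ∃ N : ℕ, r ^ N * c < γ := by
  have hγ0 : (0 : (WithZero (Multiplicative ℤ))) < γ := zero_lt_iff.mpr hγ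
  rcases eq_or_ne r 0 with hr0 | hr0
  · exact ⟨1, by simpa [hr0] using hγ0⟩
  rcases eq_or_ne c 0 with hc0 | hc0
  · exact ⟨0, by simpa [hc0] using hγ0⟩
  obtain ⟨a, rfl⟩ := WithZero.ne_zero_iff_exists.mp hr0
  obtain ⟨b, rfl⟩ := WithZero.ne_zero_iff_exists.mp hc0
  obtain ⟨g, rfl⟩ := WithZero.ne_zero_iff_exists.mp hγ
  set i := Multiplicative.toAdd a with hi
  set j := Multiplicative.toAdd b with hj
  set gg := Multiplicative.toAdd g with hg
  have hia : i ≤ -1 := by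
    have := (WithZero.coe_lt_coe.mp hr)
    have : i < 0 := by
      exact Multiplicative.toAdd_lt.mpr this
    omega
  refine ⟨(j - gg).toNat + 1, ?_⟩
  rw [← WithZero.coe_pow, ← WithZero.coe_mul, WithZero.coe_lt_coe]
  rw [← Multiplicative.toAdd_lt]
  simp only [toAdd_mul, toAdd_pow, ← hi, ← hj, ← hg, nsmul_eq_mul]
  have hN : (j - gg) < (((j - gg).toNat + 1 : ℕ) : ℤ) := by omega
  nlinarith [hN, hia]

lemma isSquare_of_val_sub_one_lt {L : Type*} [Field L] [Valued L (WithZero (Multiplicative ℤ))] [CompleteSpace L]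
    {u : L} (h : Valued.v (u - 1) < (Valued.v (2 : L)) ^ 2) : IsSquare u := by
  by_cases hu : u = 1
  · exact hu ▸ IsSquare.one
  set v : Valuation L (WithZero (Multiplicative ℤ)) := Valued.v with hv
  set t : L := u - 1 with ht
  have ht0 : t ≠ 0 := sub_ne_zero.mpr hu
  have hvt : v t ≠ 0 := (Valuation.ne_zero_iff v).mpr ht0
  have h2v : v (2 : L) ≠ 0 := by
    intro h0
    rw [h0] at h
    simp only [ne_eq, zero_pow, OfNat.ofNat_ne_zero, not_false_eq_true] at h
    exact absurd h (by simp)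
  have h2 : (2 : L) ≠ 0 := fun h0 => h2v (by rw [h0]; simp)
  set F : L → L := fun z => (t - z ^ 2) * (2 : L)⁻¹ with hF
  set y : ℕ → L := fun n => F^[n] 0 with hy
  have hysucc : ∀ n, y (n + 1) = F (y n) := fun n => Function.iterate_succ_apply' F n 0
  have hy0 : y 0 = 0 := rfl
  -- valuation of F z, multiplied through by v 2
  have hvFz : ∀ z : L, v (F z) * v 2 = v (t - z ^ 2) := by
    intro z
    rw [hF]
    simp only [map_mul, map_inv₀]
    rw [mul_assoc, inv_mul_cancel₀ h2v, mul_one]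
  -- invariant
  have hinv : ∀ n, v (y n) * v 2 ≤ v t := by
    intro n
    induction n with
    | zero => simp [hy0]
    | succ n ih =>
      rw [hysucc, hvFz]
      refine le_trans (Valuation.map_sub _ _ _) (max_le le_rfl ?_)
      have hsq : (v (y n)) ^ 2 * (v 2) ^ 2 ≤ v t * (v 2) ^ 2 := by
        have h1 : (v (y n) * v 2) * (v (y n) * v 2) ≤ v t * v t := mul_le_mul' ih ih
        have h2' : v t * v t ≤ v t * (v 2) ^ 2 := mul_le_mul_right h.le _
        have he : (v (y n)) ^ 2 * (v 2) ^ 2 = (v (y n) * v 2) * (v (y n) * v 2) := by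
          simp [pow_two, mul_comm, mul_assoc, mul_left_comm]
        rw [he]
        exact le_trans h1 h2'
      have h2vsq : ((v 2) ^ 2 : (WithZero (Multiplicative ℤ))) ≠ 0 := pow_ne_zero _ h2v
      have hle : (v (y n)) ^ 2 ≤ v t := by
        have h3 := mul_le_mul_left hsq ((v 2) ^ 2)⁻¹
        rwa [mul_assoc, mul_inv_cancel₀ h2vsq, mul_one, mul_assoc,
          mul_inv_cancel₀ h2vsq, mul_one] at h3
      rw [map_pow]
      exact hle
  -- contraction
  have hcontr : ∀ a b : L, v a * v 2 ≤ v t → v b * v 2 ≤ v t →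
      v (F a - F b) * (v 2) ^ 2 ≤ v t * v (a - b) := by
    intro a b ha hb
    have hfs : F a - F b = (b + a) * (b - a) * (2 : L)⁻¹ := by rw [hF]; ring
    rw [hfs]
    simp only [map_mul, map_inv₀]
    have hba : v (b + a) * v 2 ≤ v t := by
      refine le_trans (mul_le_mul_left (Valuation.map_add _ _ _) _) ?_
      rcases max_cases (v b) (v a) with ⟨h1, _⟩ | ⟨h1, _⟩ <;> rw [h1]
      exacts [hb, ha]
    calc v (b + a) * v (b - a) * (v 2)⁻¹ * (v 2) ^ 2
        = (v (b + a) * v 2) * v (b - a) * ((v 2)⁻¹ * v 2) := by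
          simp [pow_two, mul_comm, mul_assoc, mul_left_comm]
      _ = (v (b + a) * v 2) * v (b - a) := by rw [inv_mul_cancel₀ h2v, mul_one]
      _ ≤ v t * v (b - a) := mul_le_mul_left hba _
      _ = v t * v (a - b) := by rw [v.map_sub_swap b a]
  set c : (WithZero (Multiplicative ℤ)) := v (y 1 - y 0) with hc
  set r : (WithZero (Multiplicative ℤ)) := v t * ((v 2) ^ 2)⁻¹ with hr
  have h2vsq : ((v 2) ^ 2 : (WithZero (Multiplicative ℤ))) ≠ 0 := pow_ne_zero _ h2v
  have hrvt : r * (v 2) ^ 2 = v t := by rw [hr, mul_assoc, inv_mul_cancel₀ h2vsq, mul_one]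
  have hr1 : r < 1 := by
    by_contra hcon
    push_neg at hcon
    have hle : (v 2) ^ 2 ≤ v t := by
      calc (v 2) ^ 2 = 1 * (v 2) ^ 2 := (one_mul _).symm
        _ ≤ r * (v 2) ^ 2 := mul_le_mul_left hcon _
        _ = v t := hrvt
    exact absurd h (not_lt.mpr hle)
  have hstep : ∀ n, v (y (n + 1) - y n) ≤ r ^ n * c := by
    intro n
    induction n with
    | zero => simpa using le_rfl
    | succ n ih =>
      have hd := hcontr (y (n + 1)) (y n) (hinv (n + 1)) (hinv n)
      rw [← hysucc, ← hysucc] at hd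
      have h4 := mul_le_mul_left hd ((v 2) ^ 2)⁻¹
      rw [mul_assoc, mul_inv_cancel₀ h2vsq, mul_one] at h4
      calc v (y (n + 1 + 1) - y (n + 1))
          ≤ v t * v (y (n + 1) - y n) * ((v 2) ^ 2)⁻¹ := h4
        _ = r * v (y (n + 1) - y n) := by
            rw [hr]; simp [mul_comm, mul_assoc, mul_left_comm]
        _ ≤ r * (r ^ n * c) := mul_le_mul_right ih _
        _ = r ^ (n + 1) * c := by
            rw [pow_succ]; simp [mul_comm, mul_assoc, mul_left_comm]
  have hpowmono : ∀ {m n : ℕ}, m ≤ n → r ^ n ≤ r ^ m := by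
    intro m n hmn
    obtain ⟨k, rfl⟩ := Nat.exists_eq_add_of_le hmn
    calc r ^ (m + k) = r ^ m * r ^ k := pow_add r m k
      _ ≤ r ^ m * 1 := mul_le_mul_right (pow_le_one' hr1.le k) _
      _ = r ^ m := mul_one _
  have htel : ∀ n m, v (y (n + m) - y n) ≤ r ^ n * c := by
    intro n m
    induction m with
    | zero => simpa using zero_le'
    | succ m ih =>
      have hsplit : y (n + (m + 1)) - y n
          = (y (n + m + 1) - y (n + m)) + (y (n + m) - y n) := by
        rw [show n + (m + 1) = n + m + 1 from rfl]; ring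
      rw [hsplit]
      refine le_trans (Valuation.map_add _ _ _) (max_le ?_ ih)
      calc v (y (n + m + 1) - y (n + m)) ≤ r ^ (n + m) * c := hstep (n + m)
        _ ≤ r ^ n * c := mul_le_mul_left (hpowmono (Nat.le_add_right n m)) _
  have hcauchy : CauchySeq y := by
    rw [(Valued.hasBasis_uniformity L (WithZero (Multiplicative ℤ))).cauchySeq_iff]
    intro γ _
    have hγne : MonoidWithZeroHom.ValueGroup₀.embedding γ.1 ≠ 0 :=
      (map_ne_zero_iff _ MonoidWithZeroHom.ValueGroup₀.embedding_injective).mpr γ.ne_zero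
    obtain ⟨N, hN⟩ := zm_exists_pow_mul_lt r c _ hr1 hγne
    refine ⟨N, fun m hm n hn => ?_⟩
    simp only [Set.mem_setOf_eq]
    rw [Valuation.restrict_lt_iff_lt_embedding]
    rcases le_total m n with hmn | hnm
    · obtain ⟨k, rfl⟩ := Nat.exists_eq_add_of_le hmn
      calc Valued.v (y (m + k) - y m) ≤ r ^ m * c := htel m k
        _ ≤ r ^ N * c := mul_le_mul_left (hpowmono hm) _
        _ < _ := hN
    · obtain ⟨k, rfl⟩ := Nat.exists_eq_add_of_le hnm
      rw [Valued.v.map_sub_swap]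
      calc Valued.v (y (n + k) - y n) ≤ r ^ n * c := htel n k
        _ ≤ r ^ N * c := mul_le_mul_left (hpowmono hn) _
        _ < _ := hN
  obtain ⟨ℓ, hℓ⟩ := cauchySeq_tendsto_of_complete hcauchy
  have hFc : Continuous F := by
    rw [hF]; exact (continuous_const.sub (continuous_pow 2)).mul continuous_const
  have h1 : Tendsto (fun n => F (y n)) atTop (𝓝 (F ℓ)) := (hFc.tendsto ℓ).comp hℓ
  have h2' : Tendsto (fun n => F (y n)) atTop (𝓝 ℓ) := by
    have h5 := hℓ.comp (tendsto_add_atTop_nat 1)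
    have heq : (y ∘ fun a => a + 1) = fun n => F (y n) := funext fun n => hysucc n
    rwa [heq] at h5
  have hfix : F ℓ = ℓ := tendsto_nhds_unique h1 h2'
  have key2 : t - ℓ ^ 2 = ℓ * 2 := by
    have h3 := congrArg (fun x : L => x * 2) hfix
    simpa only [hF, mul_assoc, inv_mul_cancel₀ h2, mul_one] using h3
  refine ⟨1 + ℓ, ?_⟩
  have hut : u = t + 1 := by rw [ht]; ring
  rw [hut]
  linear_combination key2


/-- let `K` be a number field and `v₀` an odd non-archimedean place of `K`
(a finite place, i.e. a nonzero prime of `𝒪_K`, not dividing `2`). Then there exists a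
nonzero `a ∈ 𝒪_K` such that: (i) `v₀(a)` is odd; (ii) `a` is positive at every real place
of `K` (i.e. under every real embedding `K → ℝ`); (iii) `a` is a square in the completion
`K_w` for every place `w` dividing `2`. -/
theorem stmt17 {K : Type*} [Field K] [NumberField K]
    (v₀ : IsDedekindDomain.HeightOneSpectrum (𝓞 K))
    (hodd : (2 : 𝓞 K) ∉ v₀.asIdeal) :
    ∃ a : 𝓞 K, a ≠ 0 ∧
      (∃ n : ℕ, Odd n ∧
        v₀.intValuation a = ((Multiplicative.ofAdd (-(n : ℤ)) : Multiplicative ℤ) : WithZero (Multiplicative ℤ))) ∧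
      (∀ φ : K →+* ℝ, 0 < φ (algebraMap (𝓞 K) K a)) ∧
      (∀ w : IsDedekindDomain.HeightOneSpectrum (𝓞 K), (2 : 𝓞 K) ∈ w.asIdeal →
        IsSquare (algebraMap K (w.adicCompletion K) (algebraMap (𝓞 K) K a))) := by
  classical
  obtain ⟨π, hπ⟩ := v₀.intValuation_exists_uniformizer
  set I₁ : Ideal (𝓞 K) := v₀.asIdeal ^ 2 with hI₁
  set I₂ : Ideal (𝓞 K) := Ideal.span {(2 : 𝓞 K)} ^ 3 with hI₂
  have hI₂' : I₂ = Ideal.span {(8 : 𝓞 K)} := by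
    rw [hI₂, Ideal.span_singleton_pow]; norm_num
  have hmax : v₀.asIdeal.IsMaximal := Ideal.IsPrime.isMaximal v₀.isPrime v₀.ne_bot
  have hsup : v₀.asIdeal ⊔ Ideal.span {(2 : 𝓞 K)} = ⊤ := by
    by_contra hne
    have heq := hmax.eq_of_le hne le_sup_left
    exact hodd (heq ▸ (le_sup_right (a := v₀.asIdeal))
      (Ideal.mem_span_singleton_self (2 : 𝓞 K)))
  have hcop : IsCoprime I₁ I₂ := ((Ideal.isCoprime_iff_sup_eq).mpr hsup).pow
  obtain ⟨e₁, he₁, e₂, he₂, hsum⟩ := Ideal.isCoprime_iff_exists.mp hcop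
  set b : 𝓞 K := π * e₂ + e₁ with hb
  have hbπ : b - π ∈ I₁ := by
    have hbe : b - π = (1 - π) * e₁ := by rw [hb]; linear_combination (π : 𝓞 K) * hsum
    rw [hbe]; exact I₁.mul_mem_left _ he₁
  have hb1 : b - 1 ∈ I₂ := by
    have hbe : b - 1 = (π - 1) * e₂ := by rw [hb]; linear_combination hsum
    rw [hbe]; exact I₂.mul_mem_left _ he₂
  set N : ℕ := Ideal.absNorm (I₁ * I₂) with hN
  have hNmem : ((N : ℕ) : 𝓞 K) ∈ I₁ * I₂ := Ideal.absNorm_mem (I₁ * I₂)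
  have h8ne : (8 : 𝓞 K) ≠ 0 := by norm_num
  have hI₁ne : I₁ ≠ ⊥ := by
    rw [hI₁, pow_two, Ne, Ideal.mul_eq_bot]
    push_neg
    exact ⟨v₀.ne_bot, v₀.ne_bot⟩
  have hI₂ne : I₂ ≠ ⊥ := by
    rw [hI₂', Ne, Ideal.span_singleton_eq_bot]
    exact h8ne
  have hN0 : N ≠ 0 := by
    intro h0
    rw [hN, Ideal.absNorm_eq_zero_iff, Ideal.mul_eq_bot] at h0
    tauto
  have hNpos : (0 : ℝ) < (N : ℝ) := by
    exact_mod_cast Nat.pos_of_ne_zero hN0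
  obtain ⟨k, hk⟩ : ∃ k : ℕ, ∀ φ : K →+* ℝ,
      (0 : ℝ) < φ (algebraMap (𝓞 K) K b) + (k : ℝ) * (N : ℝ) := by
    rcases isEmpty_or_nonempty (K →+* ℝ) with hE | hNE
    · exact ⟨0, fun φ => (hE.false φ).elim⟩
    · obtain ⟨φ₀, hφ₀⟩ := Finite.exists_max (fun φ : K →+* ℝ => -φ (algebraMap (𝓞 K) K b))
      obtain ⟨k, hk⟩ := exists_nat_gt (-φ₀ (algebraMap (𝓞 K) K b) / (N : ℝ))
      refine ⟨k, fun φ => ?_⟩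
      have h5 : -φ (algebraMap (𝓞 K) K b) ≤ -φ₀ (algebraMap (𝓞 K) K b) := hφ₀ φ
      rw [div_lt_iff₀ hNpos] at hk
      nlinarith
  set a : 𝓞 K := b + ((k * N : ℕ) : 𝓞 K) with ha
  have hkNI : ∀ I : Ideal (𝓞 K), ((N : ℕ) : 𝓞 K) ∈ I → ((k * N : ℕ) : 𝓞 K) ∈ I := by
    intro I hI
    have : ((k * N : ℕ) : 𝓞 K) = ((k : ℕ) : 𝓞 K) * ((N : ℕ) : 𝓞 K) := by push_cast; ring
    rw [this]
    exact I.mul_mem_left _ hI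
  have hkN₁ : ((k * N : ℕ) : 𝓞 K) ∈ I₁ := hkNI I₁ (Ideal.mul_le_left hNmem)
  have hkN₂ : ((k * N : ℕ) : 𝓞 K) ∈ I₂ := hkNI I₂ (Ideal.mul_le_right hNmem)
  have haπ : a - π ∈ I₁ := by
    have : a - π = (b - π) + ((k * N : ℕ) : 𝓞 K) := by rw [ha]; ring
    rw [this]; exact I₁.add_mem hbπ hkN₁
  have ha1 : a - 1 ∈ I₂ := by
    have : a - 1 = (b - 1) + ((k * N : ℕ) : 𝓞 K) := by rw [ha]; ring
    rw [this]; exact I₂.add_mem hb1 hkN₂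
  -- (i) the valuation
  have hval : v₀.intValuation a = ((Multiplicative.ofAdd (-1 : ℤ) : Multiplicative ℤ) : (WithZero (Multiplicative ℤ))) := by
    have hle : v₀.intValuationDef (a - π) ≤
        ((Multiplicative.ofAdd (-(2 : ℕ) : ℤ) : Multiplicative ℤ) : (WithZero (Multiplicative ℤ))) :=
      (v₀.intValuation_le_pow_iff_dvd (a - π) 2).mpr (Ideal.dvd_span_singleton.mpr haπ)
    have hlt : v₀.intValuation (a - π) < v₀.intValuation π := by
      rw [hπ, WithZero.exp_eq_coe_ofAdd]
      refine lt_of_le_of_lt hle ?_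
      rw [WithZero.coe_lt_coe]
      exact Multiplicative.ofAdd_lt.mpr (by norm_num)
    have h7 : v₀.intValuation (π + (a - π)) = v₀.intValuation π :=
      Valuation.map_add_eq_of_lt_left _ hlt
    rw [show π + (a - π) = a by ring] at h7
    rw [h7, hπ, WithZero.exp_eq_coe_ofAdd]
  have hane : a ≠ 0 := by
    intro h0
    rw [h0] at hval
    simp only [Valuation.map_zero] at hval
    exact WithZero.zero_ne_coe hval
  refine ⟨a, hane, ⟨1, odd_one, by rw [hval]; norm_num⟩, ?_, ?_⟩
  · intro φ
    have h8 := hk φ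
    have h9 : φ (algebraMap (𝓞 K) K a) =
        φ (algebraMap (𝓞 K) K b) + ((k * N : ℕ) : ℝ) := by
      rw [ha, map_add, map_add, map_natCast, map_natCast]
    rw [h9]
    push_cast
    linarith
  · intro w h2w
    have h2ne : (2 : 𝓞 K) ≠ 0 := by norm_num
    have hv2lt1 : w.intValuation (2 : 𝓞 K) < 1 := by
      rw [intValuation_apply]
      exact (w.intValuation_lt_one_iff_dvd 2).mpr (Ideal.dvd_span_singleton.mpr h2w)
    have hv2ne : w.intValuation (2 : 𝓞 K) ≠ 0 := w.intValuation_ne_zero 2 h2ne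
    have ha1' : a - 1 ∈ Ideal.span {(8 : 𝓞 K)} := hI₂' ▸ ha1
    obtain ⟨m, hm⟩ := Ideal.mem_span_singleton.mp ha1'
    have hintle : w.intValuation (a - 1) ≤ (w.intValuation (2 : 𝓞 K)) ^ 3 := by
      rw [hm, map_mul]
      calc w.intValuation 8 * w.intValuation m ≤ w.intValuation 8 * 1 :=
            mul_le_mul_right (by rw [intValuation_apply]; exact w.intValuation_le_one m) _
        _ = w.intValuation 8 := mul_one _
        _ = (w.intValuation (2 : 𝓞 K)) ^ 3 := by
            rw [show (8 : 𝓞 K) = 2 ^ 3 by norm_num, map_pow]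
    have hlt3 : (w.intValuation (2 : 𝓞 K)) ^ 3 < (w.intValuation (2 : 𝓞 K)) ^ 2 := by
      have h10 := mul_lt_mul_of_pos_left hv2lt1
        (zero_lt_iff.mpr (pow_ne_zero 2 hv2ne))
      calc (w.intValuation (2 : 𝓞 K)) ^ 3
          = (w.intValuation (2 : 𝓞 K)) ^ 2 * w.intValuation (2 : 𝓞 K) := by
            rw [pow_succ]
        _ < (w.intValuation (2 : 𝓞 K)) ^ 2 * 1 := h10
        _ = (w.intValuation (2 : 𝓞 K)) ^ 2 := mul_one _
    apply isSquare_of_val_sub_one_lt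
    have hcoe : algebraMap K (w.adicCompletion K) (algebraMap (𝓞 K) K a) - 1
        = algebraMap K (w.adicCompletion K) (algebraMap (𝓞 K) K (a - 1)) := by
      rw [RingHom.map_sub (algebraMap (𝓞 K) K), RingHom.map_one,
        RingHom.map_sub (algebraMap K (w.adicCompletion K)), RingHom.map_one]
    have hval1 : Valued.v (algebraMap K (w.adicCompletion K) (algebraMap (𝓞 K) K (a - 1)))
        = w.intValuation (a - 1) := by
      have hh := w.valuedAdicCompletion_eq_valuation' (K := K) (algebraMap (𝓞 K) K (a - 1))
      exact hh.trans (w.valuation_of_algebraMap (a - 1))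
    have hval2 : Valued.v ((2 : w.adicCompletion K)) = w.intValuation (2 : 𝓞 K) := by
      have h2eq : (2 : w.adicCompletion K)
          = algebraMap K (w.adicCompletion K) (algebraMap (𝓞 K) K (2 : 𝓞 K)) := by
        rw [map_ofNat, map_ofNat]
      rw [h2eq]
      have hh := w.valuedAdicCompletion_eq_valuation' (K := K) (algebraMap (𝓞 K) K (2 : 𝓞 K))
      exact hh.trans (w.valuation_of_algebraMap (2 : 𝓞 K))
    rw [hcoe, hval1, hval2]
    exact lt_of_le_of_lt hintle hlt3
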